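/- For r ≤ s, the identity ∑_{2k ≤ s−r} (α_{r+2k})² · γ^{r+2k}_k = binom(s,r) holds, where (α_q)² = binom(s,q) · Γ(1/2+s)Γ(1+q)/(Γ(1/2+(q+s)/2)Γ(1+(q+s)/2)) and γ^q_k = (1/(4^k k!)) · (q!/(q−2k)!) · 1/((1−q)_k). -/

import Mathlib

open Finset

noncomputable section

/-- Rising factorial (Pochhammer symbol) (x)_k = x(x+1)⋯(x+k−1). -/
def poch (x : ℝ) (k : ℕ) : ℝ := ∏ j ∈ Finset.range k, (x + j)

/-- γ^q_k = (1/(4^k k!))·(q!/(q−2k)!)·1/((1−q)_k). -/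
def gam (q k : ℕ) : ℝ :=
  1 / (4 ^ k * (Nat.factorial k : ℝ)) *
    ((Nat.factorial q : ℝ) / (Nat.factorial (q - 2 * k) : ℝ)) *
    (1 / poch (1 - (q : ℝ)) k)

/-- (α_q)² = binom(s,q)·Γ(1/2+s)Γ(1+q)/(Γ(1/2+(q+s)/2)Γ(1+(q+s)/2)). -/
def alphaSq (s q : ℕ) : ℝ :=
  (Nat.choose s q : ℝ) * Real.Gamma (1 / 2 + (s : ℝ)) * Real.Gamma (1 + (q : ℝ)) /
    (Real.Gamma (1 / 2 + ((q : ℝ) + s) / 2) * Real.Gamma (1 + ((q : ℝ) + s) / 2))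

section Aux

open PowerSeries

noncomputable section

def cc : ℕ → ℕ → ℕ
  | _, 0 => 1
  | r, k+1 => Nat.choose (r+k+1) (k+1) + Nat.choose (r+k) k

/-- S t = (1+X²)^{-t} as explicit power series. -/
def Sps (t : ℕ) : PowerSeries ℤ :=
  PowerSeries.mk fun m => if 2 ∣ m then (-1)^(m/2) * (Nat.choose (t+m/2-1) (m/2) : ℤ) else 0

lemma coeff_Sps_even (t j : ℕ) :
    (coeff (R := ℤ) (2*j)) (Sps t) = (-1)^j * (Nat.choose (t+j-1) j : ℤ) := by
  simp [Sps, Nat.mul_div_cancel_left]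

lemma coeff_Sps_odd (t j : ℕ) : (coeff (R := ℤ) (2*j+1)) (Sps t) = 0 := by
  simp [Sps]

lemma constantCoeff_Sps (t : ℕ) : constantCoeff (R := ℤ) (Sps t) = 1 := by
  simp [Sps, ← PowerSeries.coeff_zero_eq_constantCoeff]

lemma Sps_zero : Sps 0 = 1 := by
  ext m
  rcases Nat.even_or_odd m with ⟨j, hj⟩ | ⟨j, hj⟩
  · have hm : m = 2*j := by omega
    subst hm
    rcases Nat.eq_zero_or_pos j with rfl | hj
    · simp [constantCoeff_Sps]
    · rw [coeff_Sps_even, PowerSeries.coeff_one,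
        show (0:ℕ)+j-1 = j-1 by omega, Nat.choose_eq_zero_of_lt (by omega)]
      simp
      omega
  · have hm : m = 2*j+1 := by omega
    subst hm
    rw [coeff_Sps_odd, PowerSeries.coeff_one]
    simp

lemma G_mul_Sps (t : ℕ) : (1 + X^2 : PowerSeries ℤ) * Sps (t+1) = Sps t := by
  ext m
  rw [add_mul, one_mul, map_add, PowerSeries.coeff_X_pow_mul']
  rcases Nat.even_or_odd m with ⟨j, hj⟩ | ⟨j, hj⟩
  · have hm : m = 2*j := by omega
    subst hm
    rcases Nat.eq_zero_or_pos j with rfl | hj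
    · norm_num [Sps]
    · rw [if_pos (by omega), show 2*j-2 = 2*(j-1) by omega,
        coeff_Sps_even, coeff_Sps_even, coeff_Sps_even]
      obtain ⟨i, rfl⟩ : ∃ i, j = i + 1 := ⟨j-1, by omega⟩
      rw [show t+1+(i+1)-1 = (t+i)+1 by omega, show t+1+(i+1-1)-1 = t+i by omega,
        show t+(i+1)-1 = t+i by omega, Nat.choose_succ_succ (t+i) i]
      push_cast
      ring
  · have hm : m = 2*j+1 := by omega
    subst hm
    rw [coeff_Sps_odd]
    rcases Nat.eq_zero_or_pos j with rfl | hj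
    · norm_num [Sps]
    · rw [if_pos (by omega), show 2*j+1-2 = 2*(j-1)+1 by omega, coeff_Sps_odd, coeff_Sps_odd]
      simp

end

noncomputable section
open Finset PowerSeries

lemma coeff_one_add_X_pow (N m : ℕ) : coeff (R := ℤ) m ((1+X:PowerSeries ℤ)^N) = N.choose m := by
  have : ((1+X:PowerSeries ℤ))^N = (((1 + Polynomial.X : Polynomial ℤ)^N : Polynomial ℤ) : PowerSeries ℤ) := by
    push_cast
    simp
  rw [this, Polynomial.coeff_coe, Polynomial.coeff_one_add_X_pow]

def Phi (r n : ℕ) : ℤ := coeff (R := ℤ) n ((1 - X) * (1 + X)^(2*(r+n)+1) * Sps (r+1))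

lemma Phi_base (r : ℕ) : Phi r 0 = 1 := by
  rw [Phi, PowerSeries.coeff_zero_eq_constantCoeff, map_mul, map_mul, map_pow]
  simp [constantCoeff_Sps]

lemma Phi_rec (r n : ℕ) :
    Phi r (n+1) = (coeff (R := ℤ) (n+1)) ((1 - X) * (1 + X)^(2*(r+n)+1) * Sps r) + 2 * Phi r n := by
  have key : ((1 - X) * (1 + X)^(2*(r+(n+1))+1) * Sps (r+1) : PowerSeries ℤ)
      = (1-X) * (1+X)^(2*(r+n)+1) * ((1+X^2) * Sps (r+1))
        + (C (R := ℤ) 2) * (X * ((1-X) * (1+X)^(2*(r+n)+1) * Sps (r+1))) := by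
    rw [show 2*(r+(n+1))+1 = (2*(r+n)+1) + 2 by ring]
    have h2 : (C (R := ℤ) 2) = (2 : PowerSeries ℤ) := by simp [map_ofNat]
    rw [h2]
    ring
  rw [Phi, key, G_mul_Sps, map_add, PowerSeries.coeff_C_mul, PowerSeries.coeff_succ_X_mul]
  rfl

lemma Phi_zero_succ (n : ℕ) : Phi 0 (n+1) = 2 * Phi 0 n := by
  rw [Phi_rec, Sps_zero, mul_one]
  have : ((1 - X) * (1 + X)^(2*(0+n)+1) : PowerSeries ℤ)
      = (1 + X)^(2*n+1) - X * (1 + X)^(2*n+1) := by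
    rw [show 0+n = n by ring]; ring
  rw [this, map_sub, PowerSeries.coeff_succ_X_mul, coeff_one_add_X_pow, coeff_one_add_X_pow]
  have : (2*n+1).choose (n+1) = (2*n+1).choose n := by
    rw [show n+1 = (2*n+1) - n by omega, Nat.choose_symm (by omega)]
  rw [this]; ring

lemma Phi_succ_succ (r n : ℕ) : Phi (r+1) (n+1) = Phi r (n+1) + 2 * Phi (r+1) n := by
  rw [Phi_rec, show 2*((r+1)+n)+1 = 2*(r+(n+1))+1 by ring]
  rfl

lemma Phi_eq (r n : ℕ) : Phi r n = 2^n * ((r+n).choose r) := by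
  induction r generalizing n with
  | zero =>
    induction n with
    | zero => simpa using Phi_base 0
    | succ n ih => rw [Phi_zero_succ, ih]; simp; ring
  | succ r ihr =>
    induction n with
    | zero => simpa using Phi_base (r+1)
    | succ n ihn =>
      rw [Phi_succ_succ, ihr, ihn,
        show r+1+(n+1) = (r+1+n)+1 by ring, Nat.choose_succ_succ (r+1+n) r,
        show r+1+n = r+(n+1) by ring]
      push_cast
      ring

def Tps (r : ℕ) : PowerSeries ℤ := (1 - X^2) * Sps (r+1)

lemma coeff_Tps (r m : ℕ) :
    coeff (R := ℤ) m (Tps r) = if 2 ∣ m then (-1)^(m/2) * (cc r (m/2) : ℤ) else 0 := by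
  rw [Tps, sub_mul, one_mul, map_sub, PowerSeries.coeff_X_pow_mul']
  rcases Nat.even_or_odd m with ⟨j, hj⟩ | ⟨j, hj⟩
  · have hm : m = 2*j := by omega
    subst hm
    rw [if_pos (show (2:ℕ) ∣ 2*j from ⟨j, rfl⟩), Nat.mul_div_cancel_left _ (by norm_num),
      coeff_Sps_even]
    rcases Nat.eq_zero_or_pos j with rfl | hj
    · rw [if_neg (show ¬ (2:ℕ) ≤ 2*0 by omega)]
      norm_num [cc]
    · obtain ⟨i, rfl⟩ : ∃ i, j = i + 1 := ⟨j-1, by omega⟩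
      rw [if_pos (show (2:ℕ) ≤ 2*(i+1) by omega), show 2*(i+1)-2 = 2*i by omega,
        coeff_Sps_even, show r+1+(i+1)-1 = r+i+1 by omega, show r+1+i-1 = r+i by omega]
      show _ = _ * ((Nat.choose (r+i+1) (i+1) + Nat.choose (r+i) i : ℕ) : ℤ)
      push_cast
      ring
  · have hm : m = 2*j+1 := by omega
    subst hm
    rw [if_neg (show ¬ (2:ℕ) ∣ 2*j+1 by omega), coeff_Sps_odd]
    rcases Nat.eq_zero_or_pos j with rfl | hj
    · rw [if_neg (show ¬ (2:ℕ) ≤ 2*0+1 by omega)]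
      norm_num
    · rw [if_pos (show (2:ℕ) ≤ 2*j+1 by omega), show 2*j+1-2 = 2*(j-1)+1 by omega,
        coeff_Sps_odd]
      simp

lemma sum_even_support (n : ℕ) (g : ℕ → ℤ) (h : ∀ i, ¬ 2 ∣ i → g i = 0) :
    ∑ i ∈ range (n+1), g i = ∑ k ∈ range (n/2+1), g (2*k) := by
  have himg : (range (n+1)).filter (fun i => 2 ∣ i) = (range (n/2+1)).image (fun k => 2*k) := by
    ext i
    simp only [mem_filter, mem_range, mem_image]
    constructor
    · rintro ⟨hi, j, rfl⟩
      exact ⟨j, by omega, rfl⟩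
    · rintro ⟨j, hj, rfl⟩
      exact ⟨by omega, j, rfl⟩
  rw [← Finset.sum_filter_of_ne (fun i _ hgi => by by_contra hc; exact hgi (h i hc)), himg,
    Finset.sum_image (fun a _ b _ hab => by omega)]

lemma Phi_sum (r n : ℕ) :
    Phi r n = ∑ k ∈ range (n/2+1), (-1:ℤ)^k * (cc r k : ℤ) * ((2*(r+n)).choose (n-2*k) : ℤ) := by
  have key : ((1 - X) * (1 + X)^(2*(r+n)+1) * Sps (r+1) : PowerSeries ℤ)
      = Tps r * (1+X)^(2*(r+n)) := by
    rw [Tps, pow_succ]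
    ring
  rw [Phi, key, PowerSeries.coeff_mul, Finset.Nat.sum_antidiagonal_eq_sum_range_succ_mk]
  rw [sum_even_support n _ (fun i hi => by rw [coeff_Tps, if_neg hi, zero_mul])]
  refine Finset.sum_congr rfl fun k hk => ?_
  rw [coeff_Tps, if_pos ⟨k, rfl⟩, Nat.mul_div_cancel_left _ (by norm_num),
    coeff_one_add_X_pow]

/-- The key integer identity. -/
lemma key_identity (r n : ℕ) :
    ∑ k ∈ range (n/2+1), (-1:ℤ)^k * (cc r k : ℤ) * ((2*(r+n)).choose (n-2*k) : ℤ)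
      = 2^n * ((r+n).choose r) := by
  rw [← Phi_sum, Phi_eq]

/-- Shifted Legendre duplication: Γ(x+1/2)Γ(x+1) = Γ(2x+1)·2^(−2x)·√π, for all real x. -/
lemma dup (x : ℝ) :
    Real.Gamma (x + 1/2) * Real.Gamma (x + 1)
      = Real.Gamma (2*x + 1) * (2:ℝ) ^ (-(2*x)) * Real.sqrt Real.pi := by
  have h := Real.Gamma_mul_Gamma_add_half (x + 1/2)
  rw [show x + 1/2 + 1/2 = x + 1 by ring, show 2*(x+1/2) = 2*x+1 by ring] at h
  rw [show (1:ℝ) - (2*x+1) = -(2*x) by ring] at h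
  exact h

/-- Γ(n + 1/2) · n! = (2n)! · 2^(−2n) √π -/
lemma Gamma_nat_add_half (n : ℕ) :
    Real.Gamma ((n:ℝ) + 1/2) * (Nat.factorial n : ℝ)
      = (Nat.factorial (2*n) : ℝ) / (2:ℝ)^(2*n) * Real.sqrt Real.pi := by
  have h := dup (n:ℝ)
  rw [Real.Gamma_nat_eq_factorial, show 2*(n:ℝ)+1 = ((2*n : ℕ):ℝ)+1 by push_cast; ring,
    Real.Gamma_nat_eq_factorial, Real.rpow_neg (by norm_num),
    show (2:ℝ)^(2*(n:ℝ)) = (2:ℝ)^((2*n:ℕ):ℝ) by push_cast; ring_nf,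
    Real.rpow_natCast] at h
  rw [h]
  ring

lemma alphaSq_eq (s q : ℕ) (h : q ≤ s) :
    alphaSq s q = (Nat.choose (2*s) (s - q) : ℝ) * 2^q / 2^s := by
  -- denominator of alphaSq
  have hden : Real.Gamma (1/2 + ((q:ℝ) + s)/2) * Real.Gamma (1 + ((q:ℝ) + s)/2)
      = (Nat.factorial (q + s) : ℝ) / (2:ℝ)^(q+s) * Real.sqrt Real.pi := by
    have h2 := dup (((q:ℝ) + s)/2)
    rw [show ((q:ℝ)+s)/2 + 1/2 = 1/2 + ((q:ℝ)+s)/2 by ring,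
      show ((q:ℝ)+s)/2 + 1 = 1 + ((q:ℝ)+s)/2 by ring,
      show 2*(((q:ℝ)+s)/2) + 1 = ((q+s:ℕ):ℝ) + 1 by push_cast; ring,
      Real.Gamma_nat_eq_factorial,
      show -(2*(((q:ℝ)+s)/2)) = -(((q+s:ℕ):ℝ)) by push_cast; ring,
      Real.rpow_neg (by norm_num), Real.rpow_natCast] at h2
    rw [h2]
    ring
  have hnum1 : Real.Gamma (1/2 + (s:ℝ)) * (Nat.factorial s : ℝ)
      = (Nat.factorial (2*s) : ℝ) / (2:ℝ)^(2*s) * Real.sqrt Real.pi := by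
    rw [show (1:ℝ)/2 + (s:ℝ) = (s:ℝ) + 1/2 by ring]
    exact Gamma_nat_add_half s
  have hnum2 : Real.Gamma (1 + (q:ℝ)) = (Nat.factorial q : ℝ) := by
    rw [show (1:ℝ) + (q:ℝ) = (q:ℝ) + 1 by ring, Real.Gamma_nat_eq_factorial]
  have hsfac : (Nat.factorial s : ℝ) ≠ 0 := Nat.cast_ne_zero.mpr (Nat.factorial_ne_zero s)
  have hqsfac : (Nat.factorial (q+s) : ℝ) ≠ 0 := Nat.cast_ne_zero.mpr (Nat.factorial_ne_zero _)
  have hsqrt : Real.sqrt Real.pi ≠ 0 := by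
    positivity
  have hchoose : (Nat.choose s q : ℝ) * (Nat.factorial q : ℝ) * (Nat.factorial (s-q) : ℝ)
      = (Nat.factorial s : ℝ) := by
    rw [show (Nat.choose s q : ℝ) * (Nat.factorial q : ℝ) * (Nat.factorial (s-q) : ℝ)
      = ((Nat.choose s q * Nat.factorial q * Nat.factorial (s-q) : ℕ) : ℝ) by push_cast; ring,
      Nat.choose_mul_factorial_mul_factorial h]
  have hchoose2 : (Nat.choose (2*s) (s-q) : ℝ) * (Nat.factorial (s-q) : ℝ) * (Nat.factorial (q+s) : ℝ)
      = (Nat.factorial (2*s) : ℝ) := by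
    rw [show (Nat.choose (2*s) (s-q) : ℝ) * (Nat.factorial (s-q) : ℝ) * (Nat.factorial (q+s) : ℝ)
      = ((Nat.choose (2*s) (s-q) * Nat.factorial (s-q) * Nat.factorial (2*s - (s-q)) : ℕ) : ℝ) by
        rw [show 2*s - (s-q) = q + s by omega]; push_cast; ring,
      Nat.choose_mul_factorial_mul_factorial (by omega)]
  rw [alphaSq, hden, hnum2]
  have hGs : Real.Gamma (1/2 + (s:ℝ)) = (Nat.factorial (2*s) : ℝ) / (2:ℝ)^(2*s) * Real.sqrt Real.pi / (Nat.factorial s : ℝ) := by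
    rw [eq_div_iff hsfac]
    exact hnum1
  rw [hGs]
  have hfacsq : (Nat.factorial (s-q) : ℝ) ≠ 0 := Nat.cast_ne_zero.mpr (Nat.factorial_ne_zero _)
  have hkey : (Nat.choose s q : ℝ) * (Nat.factorial q : ℝ) * (Nat.factorial (2*s) : ℝ)
      = (Nat.choose (2*s) (s-q) : ℝ) * (Nat.factorial s : ℝ) * (Nat.factorial (q+s) : ℝ) := by
    rw [← hchoose2, ← hchoose]
    ring
  field_simp
  linear_combination ((2:ℝ)^(q+s) * 2^s) * hkey

end

noncomputable section
open Finset

lemma gam_zero (q : ℕ) : gam q 0 = 1 := by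
  simp [gam, poch]
  exact Nat.factorial_ne_zero q

lemma asc_prod (n k : ℕ) : ∏ j ∈ range k, (n + j) = n.ascFactorial k := by
  induction k with
  | zero => simp
  | succ k ih => rw [prod_range_succ, ih, Nat.ascFactorial_succ, mul_comm]

lemma poch_eval (r k : ℕ) (hk : 1 ≤ k) :
    poch (1 - ((r+2*k : ℕ):ℝ)) k
      = (-1)^k * ((Nat.factorial (r+2*k-1) : ℝ) / (Nat.factorial (r+k-1) : ℝ)) := by
  obtain ⟨n, hn⟩ : ∃ n, r+k = n+1 := ⟨r+k-1, by omega⟩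
  have hprod : (Nat.factorial (r+k-1) : ℕ) * ∏ j ∈ range k, (r+k+j) = Nat.factorial (r+2*k-1) := by
    rw [asc_prod, hn, show n+1-1 = n by omega, Nat.factorial_mul_ascFactorial,
      show n+k = r+2*k-1 by omega]
    
  have hfac : (Nat.factorial (r+k-1) : ℝ) ≠ 0 := Nat.cast_ne_zero.mpr (Nat.factorial_ne_zero _)
  have step1 : poch (1 - ((r+2*k : ℕ):ℝ)) k
      = (-1)^k * ((∏ j ∈ range k, (r+k+j) : ℕ) : ℝ) := by
    rw [poch, ← Finset.prod_range_reflect]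
    have : ∀ j ∈ range k, (1 - ((r+2*k : ℕ):ℝ) + ((k-1-j : ℕ):ℝ))
        = (-1) * (((r+k+j : ℕ)):ℝ) := by
      intro j hj
      rw [mem_range] at hj
      have h1 : ((k-1-j : ℕ):ℝ) = (k:ℝ) - 1 - j := by
        have : (k-1-j : ℕ) + j + 1 = k := by omega
        have := congrArg (fun t : ℕ => (t:ℝ)) this
        push_cast at this
        linarith
      rw [h1]
      push_cast
      ring
    rw [Finset.prod_congr rfl this, Finset.prod_mul_distrib, Finset.prod_const,
      Finset.card_range]
    push_cast
    ring
  have h2 : ((∏ j ∈ range k, (r+k+j) : ℕ) : ℝ) * ((Nat.factorial (r+k-1)) : ℝ)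
      = ((Nat.factorial (r+2*k-1)) : ℝ) := by
    exact_mod_cast (mul_comm (Nat.factorial (r+k-1)) _) ▸ hprod
  rw [step1]
  congr 1
  rw [eq_div_iff hfac]
  exact h2

lemma cc_mul_fact (r k : ℕ) (hk : 1 ≤ k) :
    (cc r k : ℝ) * (Nat.factorial k : ℝ) * (Nat.factorial r : ℝ)
      = ((r:ℝ)+2*k) * (Nat.factorial (r+k-1) : ℝ) := by
  obtain ⟨i, rfl⟩ : ∃ i, k = i+1 := ⟨k-1, by omega⟩
  have h1 : (Nat.choose (r+i+1) (i+1) : ℝ) * (Nat.factorial (i+1) : ℝ) * (Nat.factorial r : ℝ)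
      = (Nat.factorial (r+i+1) : ℝ) := by
    have := Nat.choose_mul_factorial_mul_factorial (show i+1 ≤ r+i+1 by omega)
    rw [show r+i+1-(i+1) = r by omega] at this
    exact_mod_cast this
  have h2 : (Nat.choose (r+i) i : ℝ) * (Nat.factorial i : ℝ) * (Nat.factorial r : ℝ)
      = (Nat.factorial (r+i) : ℝ) := by
    have := Nat.choose_mul_factorial_mul_factorial (show i ≤ r+i by omega)
    rw [show r+i-i = r by omega] at this
    exact_mod_cast this
  have h3 : r+(i+1)-1 = r+i := by omega
  have h4 : (Nat.factorial (i+1) : ℝ) = ((i:ℝ)+1) * (Nat.factorial i : ℝ) := by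
    rw [Nat.factorial_succ]; push_cast; ring
  have h5 : (Nat.factorial (r+i+1) : ℝ) = ((r:ℝ)+i+1) * (Nat.factorial (r+i) : ℝ) := by
    rw [Nat.factorial_succ]; push_cast; ring
  have hcc : (cc r (i+1) : ℝ) = (Nat.choose (r+i+1) (i+1) : ℝ) + (Nat.choose (r+i) i : ℝ) := by
    show ((Nat.choose (r+i+1) (i+1) + Nat.choose (r+i) i : ℕ) : ℝ) = _
    push_cast; ring
  have h1' : (Nat.choose (r+i+1) (i+1) : ℝ) * (((i:ℝ)+1) * (Nat.factorial i : ℝ)) * (Nat.factorial r : ℝ)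
      = ((r:ℝ)+i+1) * (Nat.factorial (r+i) : ℝ) := by
    rw [← h4, ← h5]; exact h1
  rw [hcc, h3, h4]
  push_cast
  linear_combination h1' + ((i:ℝ)+1) * h2

lemma term_eq (s r k : ℕ) (hs : r + 2*k ≤ s) :
    alphaSq s (r+2*k) * gam (r+2*k) k
      = ((-1:ℝ)^k * (cc r k : ℝ) * ((Nat.choose (2*s) (s-r-2*k)) : ℝ)) * ((2:ℝ)^r / 2^s) := by
  rcases Nat.eq_zero_or_pos k with rfl | hk
  · rw [gam_zero, alphaSq_eq s (r+2*0) (by omega), show s - (r+2*0) = s-r-2*0 by omega]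
    show _ = _ * ((cc r 0 : ℕ) : ℝ) * _ * _
    norm_num [cc]
    ring
  · rw [alphaSq_eq s (r+2*k) hs, gam, show r+2*k-2*k = r by omega,
      poch_eval r k hk, show s - (r+2*k) = s-r-2*k by omega]
    have hfk : (Nat.factorial k : ℝ) ≠ 0 := Nat.cast_ne_zero.mpr (Nat.factorial_ne_zero _)
    have hfr : (Nat.factorial r : ℝ) ≠ 0 := Nat.cast_ne_zero.mpr (Nat.factorial_ne_zero _)
    have hf1 : (Nat.factorial (r+2*k-1) : ℝ) ≠ 0 := Nat.cast_ne_zero.mpr (Nat.factorial_ne_zero _)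
    have hf2 : (Nat.factorial (r+k-1) : ℝ) ≠ 0 := Nat.cast_ne_zero.mpr (Nat.factorial_ne_zero _)
    have hq : (Nat.factorial (r+2*k) : ℝ) = ((r:ℝ)+2*k) * (Nat.factorial (r+2*k-1) : ℝ) := by
      obtain ⟨m, hm⟩ : ∃ m, r+2*k = m+1 := ⟨r+2*k-1, by omega⟩
      have hcast : ((r:ℝ)+2*k) = ((m:ℝ)+1) := by
        have := congrArg (fun t : ℕ => (t:ℝ)) hm
        push_cast at this; linarith
      rw [hm, Nat.factorial_succ, show m+1-1 = m by omega, hcast]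
      push_cast; ring
    have hcc := cc_mul_fact r k hk
    have hm1 : (-1:ℝ)^k * (-1)^k = 1 := by
      rw [← pow_add, ← two_mul]
      exact Even.neg_one_pow ⟨k, by ring⟩
    have h2rk : (2:ℝ)^(r+2*k) = 2^r * (2^k * 2^k) := by
      rw [pow_add, two_mul, pow_add]
    have h4 : (4:ℝ)^k = 2^k * 2^k := by
      rw [show (4:ℝ) = 2*2 by norm_num, mul_pow]
    have h2k : (2:ℝ)^k ≠ 0 := pow_ne_zero _ (by norm_num)
    have h2s : (2:ℝ)^s ≠ 0 := pow_ne_zero _ (by norm_num)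
    have hne : (-1:ℝ)^k ≠ 0 := by
      intro hc
      have := hm1
      rw [hc] at this
      norm_num at this
    have hinv : (1:ℝ) / ((-1:ℝ)^k * ((Nat.factorial (r+2*k-1) : ℝ)/(Nat.factorial (r+k-1) : ℝ)))
        = (-1:ℝ)^k * ((Nat.factorial (r+k-1) : ℝ)/(Nat.factorial (r+2*k-1) : ℝ)) := by
      rw [one_div, mul_inv, inv_div, inv_eq_of_mul_eq_one_right hm1]
    rw [hq, h2rk, h4, hinv]
    field_simp
    linear_combination (-(((2*s).choose (s-r-2*k) : ℝ))) * hcc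

end

/-- For r ≤ s, ∑_{2k ≤ s−r} (α_{r+2k})² γ^{r+2k}_k = binom(s,r). -/
theorem stmt10 (s r : ℕ) (h : r ≤ s) :
    ∑ k ∈ Finset.range ((s - r) / 2 + 1), alphaSq s (r + 2 * k) * gam (r + 2 * k) k
      = (Nat.choose s r : ℝ) := by
  have hterm : ∀ k ∈ Finset.range ((s - r) / 2 + 1),
      alphaSq s (r + 2 * k) * gam (r + 2 * k) k
        = ((-1:ℝ)^k * (cc r k : ℝ) * ((Nat.choose (2*s) (s-r-2*k)) : ℝ)) * ((2:ℝ)^r / 2^s) := by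
    intro k hk
    rw [Finset.mem_range] at hk
    exact term_eq s r k (by omega)
  rw [Finset.sum_congr rfl hterm, ← Finset.sum_mul]
  have hki := key_identity r (s - r)
  rw [show r + (s - r) = s by omega] at hki
  have hreal : ∑ k ∈ Finset.range ((s-r)/2+1),
      (-1:ℝ)^k * (cc r k : ℝ) * ((Nat.choose (2*s) (s-r-2*k)) : ℝ)
        = 2^(s-r) * (Nat.choose s r : ℝ) := by
    have h2 := congrArg (fun z : ℤ => (z : ℝ)) hki
    push_cast at h2
    exact h2
  rw [hreal]
  have hps : (2:ℝ)^(s-r) * 2^r = 2^s := by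
    rw [← pow_add, show s-r+r = s by omega]
  have h2s : (2:ℝ)^s ≠ 0 := pow_ne_zero _ two_ne_zero
  calc (2^(s-r) * (Nat.choose s r : ℝ)) * (2^r/2^s)
      = (Nat.choose s r : ℝ) * ((2^(s-r) * 2^r) / 2^s) := by ring
    _ = (Nat.choose s r : ℝ) := by rw [hps, div_self h2s, mul_one]

end Aux

end
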